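/- Let H be a real Hilbert space, let φ₁, …, φ_N be elements of H with ‖φ_i‖² = 1 for all i = 1, …, N, and let W be a finite-dimensional subspace of H with r := dim(W). Define ε := (1/N) · Σ_{i=1}^N inf_{g ∈ W} ‖g − φ_i‖². Then r ≥ N · (1 − ε) / (1 + √(Σ_{i ≠ j} ⟨φ_i, φ_j⟩²)). -/

import Mathlib

open Finset
open scoped RealInnerProductSpace

private lemma iInf_dist_sq_eq {H : Type*} [NormedAddCommGroup H] [InnerProductSpace ℝ H]
    [CompleteSpace H] (W : Submodule ℝ H) [FiniteDimensional ℝ W] (x : H) :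
    (⨅ g : W, ‖(g : H) - x‖ ^ 2) = ‖x‖ ^ 2 - ‖(W.orthogonalProjectionOnto x : H)‖ ^ 2 := by
  have hpyth : ∀ g : W, ‖(g : H) - x‖ ^ 2
      = ‖(g : H) - W.orthogonalProjectionOnto x‖ ^ 2 + ‖(W.orthogonalProjectionOnto x : H) - x‖ ^ 2 := by
    intro g
    have hmem : (g : H) - W.orthogonalProjectionOnto x ∈ W :=
      W.sub_mem g.2 (W.orthogonalProjectionOnto x).2
    have horth : (W.orthogonalProjectionOnto x : H) - x ∈ Wᗮ := by
      simpa using (Wᗮ).neg_mem (Submodule.sub_starProjection_mem_orthogonal (K := W) x)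
    have hinner : ⟪(g : H) - W.orthogonalProjectionOnto x, (W.orthogonalProjectionOnto x : H) - x⟫ = 0 :=
      Submodule.inner_right_of_mem_orthogonal hmem horth
    have := norm_add_sq_real ((g : H) - W.orthogonalProjectionOnto x)
      ((W.orthogonalProjectionOnto x : H) - x)
    rw [hinner] at this
    simpa [sub_add_sub_cancel] using this
  have h1 : (⨅ g : W, ‖(g : H) - x‖ ^ 2) = ‖(W.orthogonalProjectionOnto x : H) - x‖ ^ 2 := by
    apply le_antisymm
    · exact ciInf_le ⟨0, fun y ⟨g, hg⟩ => hg ▸ sq_nonneg _⟩ (W.orthogonalProjectionOnto x) |>.trans_eq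
        (by simp)
    · exact le_ciInf fun g => by
        rw [hpyth g]; nlinarith [sq_nonneg ‖(g : H) - W.orthogonalProjectionOnto x‖]
  have h2 : ‖x‖ ^ 2 = ‖(W.orthogonalProjectionOnto x : H)‖ ^ 2
      + ‖(W.orthogonalProjectionOnto x : H) - x‖ ^ 2 := by
    have hinner : ⟪(W.orthogonalProjectionOnto x : H), x - W.orthogonalProjectionOnto x⟫ = 0 :=
      Submodule.inner_right_of_mem_orthogonal (W.orthogonalProjectionOnto x).2
        (Submodule.sub_starProjection_mem_orthogonal (K := W) x)
    have := norm_add_sq_real ((W.orthogonalProjectionOnto x : H)) (x - W.orthogonalProjectionOnto x)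
    rw [hinner] at this
    rw [norm_sub_rev ((W.orthogonalProjectionOnto x : H)) x]
    simpa [add_sub_cancel] using this
  rw [h1]; linarith

private lemma unit_vector_sum_inner_sq_le {H : Type*} [NormedAddCommGroup H]
    [InnerProductSpace ℝ H] (N : ℕ) (φ : Fin N → H) (hφ : ∀ i, ‖φ i‖ ^ 2 = 1)
    (e : H) (he : ‖e‖ = 1) :
    (∑ i, ⟪e, φ i⟫ ^ 2) ≤ 1 + Real.sqrt (∑ p ∈ (univ : Finset (Fin N × Fin N)).filter
      (fun p => p.1 ≠ p.2), ⟪φ p.1, φ p.2⟫ ^ 2) := by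
  set c : Fin N → ℝ := fun i => ⟪e, φ i⟫ with hc
  set s : ℝ := ∑ i, c i ^ 2 with hs
  set S : ℝ := ∑ p ∈ (univ : Finset (Fin N × Fin N)).filter (fun p => p.1 ≠ p.2),
      ⟪φ p.1, φ p.2⟫ ^ 2 with hSdef
  have hS0 : 0 ≤ S := Finset.sum_nonneg fun p _ => sq_nonneg _
  have hs0 : 0 ≤ s := Finset.sum_nonneg fun i _ => sq_nonneg _
  have h1 : s = ⟪e, ∑ i, c i • φ i⟫ := by
    rw [inner_sum]
    exact Finset.sum_congr rfl fun i _ => by rw [real_inner_smul_right]; ring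
  have h2 : s ≤ ‖∑ i, c i • φ i‖ := by
    calc s = ⟪e, ∑ i, c i • φ i⟫ := h1
    _ ≤ ‖e‖ * ‖∑ i, c i • φ i‖ := real_inner_le_norm _ _
    _ = ‖∑ i, c i • φ i‖ := by rw [he, one_mul]
  have h3 : ‖∑ i, c i • φ i‖ ^ 2 = ∑ i, ∑ j, c i * c j * ⟪φ i, φ j⟫ := by
    rw [← real_inner_self_eq_norm_sq, sum_inner]
    refine Finset.sum_congr rfl fun i _ => ?_
    rw [real_inner_smul_left, inner_sum, Finset.mul_sum]
    exact Finset.sum_congr rfl fun j _ => by rw [real_inner_smul_right]; ring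
  have h4 : ∑ i, ∑ j, c i * c j * ⟪φ i, φ j⟫
      = s + ∑ p ∈ (univ : Finset (Fin N × Fin N)).filter (fun p => p.1 ≠ p.2),
        c p.1 * c p.2 * ⟪φ p.1, φ p.2⟫ := by
    rw [← Finset.sum_product', Finset.univ_product_univ]
    rw [← Finset.sum_filter_add_sum_filter_not univ (fun p : Fin N × Fin N => p.1 = p.2)]
    congr 1
    rw [Finset.sum_filter, ← Finset.univ_product_univ, Finset.sum_product, hs]
    refine Finset.sum_congr rfl fun i _ => ?_
    rw [Finset.sum_ite_eq]
    simp [real_inner_self_eq_norm_sq, hφ i, sq]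
  have h5 : ∑ p ∈ (univ : Finset (Fin N × Fin N)).filter (fun p => p.1 ≠ p.2),
        c p.1 * c p.2 * ⟪φ p.1, φ p.2⟫ ≤ s * Real.sqrt S := by
    set F := (univ : Finset (Fin N × Fin N)).filter (fun p => p.1 ≠ p.2)
    have cs := Finset.sum_mul_sq_le_sq_mul_sq F (fun p => c p.1 * c p.2)
      (fun p => ⟪φ p.1, φ p.2⟫)
    have hA : ∑ p ∈ F, (c p.1 * c p.2) ^ 2 ≤ s ^ 2 := by
      have : s ^ 2 = ∑ p ∈ (univ : Finset (Fin N × Fin N)), (c p.1 * c p.2) ^ 2 := by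
        rw [hs, sq, Finset.sum_mul_sum, ← Finset.sum_product']
        exact Finset.sum_congr rfl fun p _ => by ring
      rw [this]
      exact Finset.sum_le_sum_of_subset_of_nonneg (Finset.filter_subset _ _)
        (fun p _ _ => sq_nonneg _)
    have key : (∑ p ∈ F, c p.1 * c p.2 * ⟪φ p.1, φ p.2⟫) ^ 2 ≤ (s * Real.sqrt S) ^ 2 := by
      calc (∑ p ∈ F, c p.1 * c p.2 * ⟪φ p.1, φ p.2⟫) ^ 2
          ≤ (∑ p ∈ F, (c p.1 * c p.2) ^ 2) * ∑ p ∈ F, ⟪φ p.1, φ p.2⟫ ^ 2 := cs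
        _ ≤ s ^ 2 * S :=
            mul_le_mul_of_nonneg_right hA (Finset.sum_nonneg fun p _ => sq_nonneg _)
        _ = (s * Real.sqrt S) ^ 2 := by rw [mul_pow, Real.sq_sqrt hS0]
    have h6 : ∑ p ∈ F, c p.1 * c p.2 * ⟪φ p.1, φ p.2⟫
        ≤ |∑ p ∈ F, c p.1 * c p.2 * ⟪φ p.1, φ p.2⟫| := le_abs_self _
    have h7 : |∑ p ∈ F, c p.1 * c p.2 * ⟪φ p.1, φ p.2⟫| ≤ s * Real.sqrt S := by
      rw [← Real.sqrt_sq_eq_abs]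
      calc Real.sqrt ((∑ p ∈ F, c p.1 * c p.2 * ⟪φ p.1, φ p.2⟫) ^ 2)
          ≤ Real.sqrt ((s * Real.sqrt S) ^ 2) := Real.sqrt_le_sqrt key
        _ = s * Real.sqrt S := Real.sqrt_sq (mul_nonneg hs0 (Real.sqrt_nonneg S))
    exact h6.trans h7
  have h8 : s ^ 2 ≤ s * (1 + Real.sqrt S) := by
    calc s ^ 2 ≤ ‖∑ i, c i • φ i‖ ^ 2 := by
          nlinarith [norm_nonneg (∑ i, c i • φ i)]
      _ = ∑ i, ∑ j, c i * c j * ⟪φ i, φ j⟫ := h3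
      _ = s + ∑ p ∈ (univ : Finset (Fin N × Fin N)).filter (fun p => p.1 ≠ p.2),
            c p.1 * c p.2 * ⟪φ p.1, φ p.2⟫ := h4
      _ ≤ s + s * Real.sqrt S := by linarith
      _ = s * (1 + Real.sqrt S) := by ring
  rcases eq_or_lt_of_le hs0 with h | h
  · rw [← h]; positivity
  · nlinarith

/-- **Dimension lower bound (deterministic case).**
If `φ 1, …, φ N` are unit-norm vectors in a real Hilbert space `H`, `W` is a
finite-dimensional subspace of `H` with `r = dim W`, and
`ε = (1/N) ∑ i, inf_{g ∈ W} ‖g - φ i‖²`, then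
`r ≥ N (1 - ε) / (1 + √(∑_{i ≠ j} ⟨φ i, φ j⟩²))`. -/
theorem dimension_lower_bound_deterministic
    {H : Type*} [NormedAddCommGroup H] [InnerProductSpace ℝ H] [CompleteSpace H]
    (N : ℕ) (φ : Fin N → H) (hφ : ∀ i, ‖φ i‖ ^ 2 = 1)
    (W : Submodule ℝ H) [FiniteDimensional ℝ W]
    (r : ℕ) (hr : r = Module.finrank ℝ W)
    (ε : ℝ)
    (hε : ε = (1 / (N : ℝ)) * ∑ i, ⨅ g : W, ‖(g : H) - φ i‖ ^ 2) :
    (r : ℝ) ≥ (N : ℝ) * (1 - ε) /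
      (1 + Real.sqrt (∑ p ∈ (univ : Finset (Fin N × Fin N)).filter (fun p => p.1 ≠ p.2),
        ⟪φ p.1, φ p.2⟫ ^ 2)) := by
  set S : ℝ := ∑ p ∈ (univ : Finset (Fin N × Fin N)).filter (fun p => p.1 ≠ p.2),
      ⟪φ p.1, φ p.2⟫ ^ 2 with hSdef
  have hS0 : 0 ≤ S := Finset.sum_nonneg fun p _ => sq_nonneg _
  have hD : (0 : ℝ) < 1 + Real.sqrt S := by positivity
  rw [ge_iff_le, div_le_iff₀ hD]
  rcases Nat.eq_zero_or_pos N with hN | hN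
  · subst hN
    simp only [Nat.cast_zero, zero_mul]
    positivity
  have hNpos : (0 : ℝ) < N := by exact_mod_cast hN
  -- the sum of squared projection norms
  set T : Fin N → ℝ := fun i => ‖(W.orthogonalProjectionOnto (φ i) : H)‖ ^ 2 with hT
  have hsum : (N : ℝ) * (1 - ε) = ∑ i, T i := by
    rw [hε]
    have h1 : (∑ i, ⨅ g : W, ‖(g : H) - φ i‖ ^ 2) = ∑ i, (1 - T i) :=
      Finset.sum_congr rfl fun i _ => by rw [iInf_dist_sq_eq W (φ i), hφ i]
    rw [h1, Finset.sum_sub_distrib, Finset.sum_const, Finset.card_univ, Fintype.card_fin]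
    field_simp
    rw [nsmul_eq_mul, mul_one]; ring
  -- orthonormal basis of W
  set b := stdOrthonormalBasis ℝ W with hb
  have hTeq : ∀ i, T i = ∑ k, ⟪((b k : W) : H), φ i⟫ ^ 2 := by
    intro i
    set x := φ i
    have h2 : (W.orthogonalProjectionOnto x : H)
        = ∑ k, ⟪((b k : W) : H), x⟫ • ((b k : W) : H) := by
      have := b.orthogonalProjectionOnto_apply_eq_sum x
      calc (W.orthogonalProjectionOnto x : H)
          = ((∑ k, ⟪((b k : W) : H), x⟫ • b k : W) : H) := by rw [← this]
        _ = ∑ k, ⟪((b k : W) : H), x⟫ • ((b k : W) : H) := by push_cast; rfl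
    have h0 : ⟪(W.orthogonalProjectionOnto x : H), x - W.orthogonalProjectionOnto x⟫ = 0 :=
      Submodule.inner_right_of_mem_orthogonal (W.orthogonalProjectionOnto x).2
        (Submodule.sub_starProjection_mem_orthogonal (K := W) x)
    rw [inner_sub_right] at h0
    have h1 : T i = ⟪(W.orthogonalProjectionOnto x : H), x⟫ := by
      rw [hT]
      simp only
      rw [← real_inner_self_eq_norm_sq]
      linarith
    rw [h1]
    nth_rewrite 1 [h2]
    rw [sum_inner]
    exact Finset.sum_congr rfl fun k _ => by rw [real_inner_smul_left]; ring
  have hk : ∀ k, (∑ i, ⟪((b k : W) : H), φ i⟫ ^ 2) ≤ 1 + Real.sqrt S := by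
    intro k
    apply unit_vector_sum_inner_sq_le N φ hφ
    rw [Submodule.norm_coe]
    exact b.orthonormal.1 k
  calc (N : ℝ) * (1 - ε) = ∑ i, T i := hsum
    _ = ∑ i, ∑ k, ⟪((b k : W) : H), φ i⟫ ^ 2 := Finset.sum_congr rfl fun i _ => hTeq i
    _ = ∑ k, ∑ i, ⟪((b k : W) : H), φ i⟫ ^ 2 := Finset.sum_comm
    _ ≤ ∑ _k : Fin (Module.finrank ℝ W), (1 + Real.sqrt S) :=
        Finset.sum_le_sum fun k _ => hk k
    _ = (Module.finrank ℝ W : ℝ) * (1 + Real.sqrt S) := by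
        rw [Finset.sum_const, Finset.card_univ, Fintype.card_fin, nsmul_eq_mul]
    _ = (r : ℝ) * (1 + Real.sqrt S) := by rw [hr]
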